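/- Fix d ≥ 1, mesh steps Δx_1, …, Δx_d > 0, a time step Δt > 0 and w_∞ ≥ 0 satisfying the strict 1/2-CFL condition w_∞ Σ_{i=1}^d Δt/Δx_i < 1/2. Let a ∈ ℝ^d with |⟨a, e_i⟩| ≤ w_∞ for every i, and let J ∈ ℤ^d. Then x_J + Δt a ∈ C_J, and the interpolation weights at the shifted node are: α_J(x_J + Δt a) = 1 − Σ_{i=1}^d (Δt/Δx_i)|a_i|; α_{J+e_i}(x_J + Δt a) = (Δt/Δx_i)(a_i)⁺ and α_{J−e_i}(x_J + Δt a) = (Δt/Δx_i)(a_i)⁻ for each i; and α_L(x_J + Δt a) = 0 for every other L ∈ ℤ^d. In particular all these weights are nonnegative. -/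

import Mathlib

open MeasureTheory Real Set
open scoped RealInnerProductSpace ENNReal

noncomputable section

/-- `ℝ^d` with the Euclidean structure. -/
abbrev Euc (d : ℕ) := EuclideanSpace ℝ (Fin d)

open Classical in
/-- `∇̂W`: the gradient of `W` away from `0`, and `0` at `0`. -/
def hatGrad {d : ℕ} (W : Euc d → ℝ) (x : Euc d) : Euc d :=
  if x = 0 then 0 else gradient W x

/-- Positive part `r⁺ = max(r,0)`. -/
def pos (r : ℝ) : ℝ := max r 0

/-- Negative part `r⁻ = max(-r,0)`. -/
def neg (r : ℝ) : ℝ := max (-r) 0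

/-- The node `x_J = (J_1 Δx_1, …, J_d Δx_d)`. -/
def node {d : ℕ} (Δx : Fin d → ℝ) (J : Fin d → ℤ) : Euc d :=
  (EuclideanSpace.equiv (Fin d) ℝ).symm (fun i => (J i : ℝ) * Δx i)

/-- The cell `C_J = Π_i [(J_i - 1/2)Δx_i, (J_i + 1/2)Δx_i)`. -/
def cell {d : ℕ} (Δx : Fin d → ℝ) (J : Fin d → ℤ) : Set (Euc d) :=
  {y | ∀ i, ((J i : ℝ) - 1/2) * Δx i ≤ y i ∧ y i < ((J i : ℝ) + 1/2) * Δx i}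

open Classical in
/-- The interpolation weight `α_J(y)`: since the cells `(C_L)` are pairwise disjoint, at most
one of the summands below is nonzero, and this agrees with the case-by-case definition:
`1 - Σ_i |⟨y - x_J, e_i⟩|/Δx_i` if `y ∈ C_J`; `(⟨y - x_{J∓e_i}, e_i⟩)^±/Δx_i` if
`y ∈ C_{J∓e_i}`; and `0` otherwise. -/
def interpWeight {d : ℕ} (Δx : Fin d → ℝ) (J : Fin d → ℤ) (y : Euc d) : ℝ :=
  (if y ∈ cell Δx J then 1 - ∑ i, |y i - node Δx J i| / Δx i else 0)
    + ∑ i : Fin d,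
      ((if y ∈ cell Δx (J - Pi.single i 1) then
          pos (y i - node Δx (J - Pi.single i 1) i) / Δx i else 0)
        + (if y ∈ cell Δx (J + Pi.single i 1) then
            neg (y i - node Δx (J + Pi.single i 1) i) / Δx i else 0))


lemma myPos_mul (t r : ℝ) (ht : 0 ≤ t) : pos (t * r) = t * pos r := by
  simp only [pos, mul_max_of_nonneg _ _ ht, mul_zero]

lemma myNeg_mul (t r : ℝ) (ht : 0 ≤ t) : neg (t * r) = t * neg r := by
  simp only [neg, mul_max_of_nonneg _ _ ht, mul_zero, ← mul_neg]

lemma singleOne_ne_zero {d : ℕ} (i : Fin d) : (Pi.single i 1 : Fin d → ℤ) ≠ 0 := by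
  intro h
  have := congrFun h i
  simp at this

lemma addSingle_ne {d : ℕ} (J : Fin d → ℤ) (i : Fin d) : J + Pi.single i 1 ≠ J := by
  intro h
  have := congrFun h i
  simp [Pi.single_apply] at this

lemma subSingle_ne {d : ℕ} (J : Fin d → ℤ) (i : Fin d) : J - Pi.single i 1 ≠ J := by
  intro h
  have := congrFun h i
  simp [Pi.single_apply] at this

lemma addadd_ne {d : ℕ} (J : Fin d → ℤ) (i i0 : Fin d) :
    J + Pi.single i0 1 + Pi.single i 1 ≠ J := by
  intro h
  have := congrFun h i0
  simp [Pi.single_apply] at this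
  split_ifs at this <;> omega

lemma subsub_ne {d : ℕ} (J : Fin d → ℤ) (i i0 : Fin d) :
    J - Pi.single i0 1 - Pi.single i 1 ≠ J := by
  intro h
  have := congrFun h i0
  simp [Pi.single_apply] at this
  split_ifs at this <;> omega

lemma addsub_eq_iff {d : ℕ} (J : Fin d → ℤ) (i i0 : Fin d) :
    J + Pi.single i0 1 - Pi.single i 1 = J ↔ i = i0 := by
  constructor
  · intro h
    by_contra hne
    have := congrFun h i0
    simp [Pi.single_apply, Ne.symm hne] at this
  · rintro rfl
    simp

lemma subadd_eq_iff {d : ℕ} (J : Fin d → ℤ) (i i0 : Fin d) :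
    J - Pi.single i0 1 + Pi.single i 1 = J ↔ i = i0 := by
  constructor
  · intro h
    by_contra hne
    have := congrFun h i0
    simp [Pi.single_apply, Ne.symm hne] at this
  · rintro rfl
    simp

/-- Under the strict 1/2-CFL condition, the point `x_J + Δt a` stays in the cell `C_J` and
the interpolation weights at `x_J + Δt a` are explicitly the upwind coefficients; in
particular they are nonnegative. -/
theorem stmt11 {d : ℕ} (hd : 1 ≤ d) (Δx : Fin d → ℝ) (hΔx : ∀ i, 0 < Δx i)
    (Δt : ℝ) (hΔt : 0 < Δt) (winf : ℝ) (hwinf : 0 ≤ winf)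
    (hCFL : winf * ∑ i, Δt / Δx i < 1 / 2)
    (a : Euc d) (ha : ∀ i, |a i| ≤ winf) (J : Fin d → ℤ) :
    node Δx J + Δt • a ∈ cell Δx J ∧
    interpWeight Δx J (node Δx J + Δt • a) = 1 - ∑ i, (Δt / Δx i) * |a i| ∧
    (∀ i : Fin d, interpWeight Δx (J + Pi.single i 1) (node Δx J + Δt • a)
      = (Δt / Δx i) * pos (a i)) ∧
    (∀ i : Fin d, interpWeight Δx (J - Pi.single i 1) (node Δx J + Δt • a)
      = (Δt / Δx i) * neg (a i)) ∧
    (∀ L : Fin d → ℤ, L ≠ J → (∀ i : Fin d, L ≠ J + Pi.single i 1 ∧ L ≠ J - Pi.single i 1) →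
      interpWeight Δx L (node Δx J + Δt • a) = 0) ∧
    (∀ L : Fin d → ℤ, 0 ≤ interpWeight Δx L (node Δx J + Δt • a)) := by
  set y := node Δx J + Δt • a with hy
  have hyi : ∀ i, y i = (J i : ℝ) * Δx i + Δt * a i := fun i => rfl
  have hsmall : ∀ i, |Δt * a i| < Δx i / 2 := by
    intro i
    have hxi := hΔx i
    have h2 : winf * (Δt / Δx i) ≤ winf * ∑ j, Δt / Δx j :=
      mul_le_mul_of_nonneg_left
        (Finset.single_le_sum (f := fun j => Δt / Δx j) (fun j _ => (div_pos hΔt (hΔx j)).le)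
          (Finset.mem_univ i)) hwinf
    have h3 : winf * (Δt / Δx i) < 1 / 2 := lt_of_le_of_lt h2 hCFL
    have h4 : winf * Δt < Δx i / 2 := by
      rw [← mul_div_assoc] at h3
      have := (div_lt_iff₀ hxi).mp h3
      linarith
    rw [abs_mul, abs_of_pos hΔt]
    have h5 : Δt * |a i| ≤ Δt * winf := mul_le_mul_of_nonneg_left (ha i) hΔt.le
    have h6 : Δt * winf = winf * Δt := mul_comm _ _
    linarith
  have hmemJ : y ∈ cell Δx J := by
    intro i
    rw [hyi i]
    obtain ⟨h1, h2⟩ := abs_lt.mp (hsmall i)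
    constructor <;> nlinarith [hΔx i]
  have huniq : ∀ K : Fin d → ℤ, y ∈ cell Δx K → K = J := by
    intro K hK
    funext i
    have h := hK i
    rw [hyi i] at h
    obtain ⟨h1, h2⟩ := h
    obtain ⟨h3, h4⟩ := abs_lt.mp (hsmall i)
    have hxi := hΔx i
    have hlt1 : (K i : ℝ) * Δx i < ((J i : ℝ) + 1) * Δx i := by nlinarith
    have hlt2 : (J i : ℝ) * Δx i < ((K i : ℝ) + 1) * Δx i := by nlinarith
    have l1 : (K i : ℝ) < (J i : ℝ) + 1 := (mul_lt_mul_iff_of_pos_right hxi).mp hlt1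
    have l2 : (J i : ℝ) < (K i : ℝ) + 1 := (mul_lt_mul_iff_of_pos_right hxi).mp hlt2
    have m1 : K i < J i + 1 := by exact_mod_cast l1
    have m2 : J i < K i + 1 := by exact_mod_cast l2
    omega
  have hyJ : ∀ i, y i - node Δx J i = Δt * a i := by
    intro i
    rw [hyi i]
    show _ - (J i : ℝ) * Δx i = _
    ring
  have hw : ∀ L : Fin d → ℤ, interpWeight Δx L y =
      (if L = J then 1 - ∑ i, (Δt / Δx i) * |a i| else 0)
        + ∑ i : Fin d,
          ((if L - Pi.single i 1 = J then (Δt / Δx i) * pos (a i) else 0)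
            + (if L + Pi.single i 1 = J then (Δt / Δx i) * neg (a i) else 0)) := by
    intro L
    unfold interpWeight
    congr 1
    · by_cases hL : L = J
      · subst hL
        rw [if_pos hmemJ, if_pos rfl]
        congr 1
        apply Finset.sum_congr rfl
        intro i _
        rw [hyJ i, abs_mul, abs_of_pos hΔt]
        ring
      · rw [if_neg (fun h => hL (huniq _ h)), if_neg hL]
    · apply Finset.sum_congr rfl
      intro i _
      congr 1
      · by_cases h1 : L - Pi.single i 1 = J
        · rw [if_pos (by rw [h1]; exact hmemJ), if_pos h1, h1, hyJ i, myPos_mul _ _ hΔt.le]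
          ring
        · rw [if_neg (fun h => h1 (huniq _ h)), if_neg h1]
      · by_cases h2 : L + Pi.single i 1 = J
        · rw [if_pos (by rw [h2]; exact hmemJ), if_pos h2, h2, hyJ i, myNeg_mul _ _ hΔt.le]
          ring
        · rw [if_neg (fun h => h2 (huniq _ h)), if_neg h2]
  have hb : ∑ i, (Δt / Δx i) * |a i| ≤ winf * ∑ i, Δt / Δx i := by
    rw [Finset.mul_sum]
    apply Finset.sum_le_sum
    intro i _
    rw [mul_comm winf]
    exact mul_le_mul_of_nonneg_left (ha i) (div_pos hΔt (hΔx i)).le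
  have hmain : 0 ≤ 1 - ∑ i, (Δt / Δx i) * |a i| := by linarith
  refine ⟨hmemJ, ?_, ?_, ?_, ?_, ?_⟩
  · rw [hw J]
    simp [addSingle_ne, subSingle_ne, singleOne_ne_zero]
  · intro i0
    rw [hw (J + Pi.single i0 1)]
    simp [addSingle_ne, addadd_ne, addsub_eq_iff, singleOne_ne_zero]
  · intro i0
    rw [hw (J - Pi.single i0 1)]
    simp [subSingle_ne, subsub_ne, subadd_eq_iff, singleOne_ne_zero]
  · intro L hL hLe
    rw [hw L]
    rw [if_neg hL, zero_add]
    apply Finset.sum_eq_zero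
    intro i _
    have h1 : ¬(L - Pi.single i 1 = J) := fun h => (hLe i).1 (eq_add_of_sub_eq h)
    have h2 : ¬(L + Pi.single i 1 = J) := fun h => (hLe i).2 (eq_sub_of_add_eq h)
    rw [if_neg h1, if_neg h2, add_zero]
  · intro L
    rw [hw L]
    apply add_nonneg
    · split_ifs with h
      · exact hmain
      · exact le_rfl
    · apply Finset.sum_nonneg
      intro i _
      apply add_nonneg <;> split_ifs <;>
        first
          | exact le_rfl
          | exact mul_nonneg (div_pos hΔt (hΔx i)).le (le_max_right _ _)
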